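/- Let K₂ = {w ∈ {a,b}* : the letters a and b each occur at least twice in w, and the first occurrence of a precedes the first occurrence of b} (this is the β-class of the word a²b², over two distinct letters a, b of 𝔄). Then the direct product L₂¹ × M(x) and the syntactic monoid M_synt(K₂) satisfy exactly the same identities (they generate the same variety). -/

import Mathlib

/-- Words over the countably infinite alphabet `ℕ`. -/
abbrev Word : Type := List ℕ

/-- A monoid `M` satisfies the identity `u ≈ v` if every substitution of letters by
elements of `M` (equivalently, every monoid homomorphism from the free monoid) equalizes
`u` and `v`. -/
def Satisfies (M : Type*) [Monoid M] (u v : Word) : Prop :=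
  ∀ φ : ℕ → M, (u.map φ).prod = (v.map φ).prod

/-- A set of words `W` is stable with respect to a monoid `M`. -/
def Stable (W : Set Word) (M : Type*) [Monoid M] : Prop :=
  ∀ u v : Word, u ∈ W → Satisfies M u v → v ∈ W

/-- `u` is a `τ`-term for the monoid `M`. -/
def IsTerm (τ : Word → Word → Prop) (M : Type*) [Monoid M] (u : Word) : Prop :=
  ∀ v : Word, Satisfies M u v → τ u v

/-- The set of simple letters of a word. -/
def simpSet (u : Word) : Set ℕ := {x | u.count x = 1}

/-- The set of multiple letters of a word. -/
def mulSet (u : Word) : Set ℕ := {x | 2 ≤ u.count x}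

/-- The set of letters of a word. -/
def conSet (u : Word) : Set ℕ := {x | x ∈ u}

/-- The monoid congruence on the free monoid generated by the pairs `(a, a²)`. -/
inductive tau1 : Word → Word → Prop
  | base (a : ℕ) : tau1 [a] [a, a]
  | refl (u : Word) : tau1 u u
  | symm {u v : Word} : tau1 u v → tau1 v u
  | trans {u v x : Word} : tau1 u v → tau1 v x → tau1 u x
  | append {u v u' v' : Word} : tau1 u v → tau1 u' v' → tau1 (u ++ u') (v ++ v')

/-- The relation γ. -/
def gamma (u v : Word) : Prop := simpSet u = simpSet v ∧ mulSet u = mulSet v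

/-- The relation `τ₁ ∧ γ`. -/
def tau1gamma (u v : Word) : Prop := tau1 u v ∧ gamma u v

/-- A word is block-simple if every factor all of whose letters are multiple
(in particular, every block) involves at most one letter. -/
def BlockSimple (u : Word) : Prop :=
  ∀ p f s : Word, u = p ++ f ++ s → (∀ x ∈ f, x ∈ mulSet u) →
    ∀ x ∈ f, ∀ y ∈ f, x = y

/-- `assemble m t A = A 0 ++ t 0 :: A 1 ++ t 1 :: ... ++ t (m-1) :: A m`:
the word with blocks `A i` separated by the letters `t i`. -/
def assemble (m : ℕ) (t : Fin m → ℕ) (A : Fin (m + 1) → Word) : Word :=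
  A 0 ++ (List.ofFn fun i : Fin m => t i :: A i.succ).flatten

/-- Common core of the relations `β` and `∼_Q`: `u` and `v` decompose into blocks
separated by the same simple letters in the same order, corresponding blocks have the
same content; when `withOrder = true`, in corresponding blocks the order of first
occurrences of letters coincides. -/
def betaAux (withOrder : Bool) (u v : Word) : Prop :=
  ∃ (m : ℕ) (t : Fin m → ℕ) (A B : Fin (m + 1) → Word),
    u = assemble m t A ∧ v = assemble m t B ∧
    (∀ i : Fin m, u.count (t i) = 1) ∧ (∀ i : Fin m, v.count (t i) = 1) ∧
    (∀ i : Fin (m + 1), ∀ x ∈ A i, x ∈ mulSet u) ∧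
    (∀ i : Fin (m + 1), ∀ x ∈ B i, x ∈ mulSet v) ∧
    (∀ i : Fin (m + 1), ∀ x : ℕ, x ∈ A i ↔ x ∈ B i) ∧
    (withOrder = true → ∀ i : Fin (m + 1), ∀ x y : ℕ, x ∈ A i → y ∈ A i → x ≠ y →
      ((A i).idxOf x < (A i).idxOf y ↔ (B i).idxOf x < (B i).idxOf y))

/-- The relation β. -/
def beta : Word → Word → Prop := betaAux true

/-- The relation `∼_Q` (β without the condition on the order of first occurrences). -/
def simQ : Word → Word → Prop := betaAux false

/-- The words `u_n` (letters: `a = 0`, `b = 1`, `t_k = k + 1`). -/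
def uW : ℕ → Word
  | 0 => [0, 0, 1, 1]
  | k + 1 => (if k % 2 = 0 then 0 else 1) :: (k + 2) :: uW k

/-- The words `v_n` (letters: `a = 0`, `b = 1`, `t_k = k + 1`). -/
def vW : ℕ → Word
  | 0 => [1, 1, 0, 0]
  | k + 1 => (if k % 2 = 0 then 0 else 1) :: (k + 2) :: vW k

/-- A monoid satisfies the identity system
`Σ_n = {xtx ≈ xtx², xtx ≈ x²tx, xy²x ≈ x²y², u_n ≈ v_n}`. -/
def SatSigma (n : ℕ) (N : Type*) [Monoid N] : Prop :=
  Satisfies N [0, 1, 0] [0, 1, 0, 0] ∧ Satisfies N [0, 1, 0] [0, 0, 1, 0] ∧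
  Satisfies N [0, 1, 1, 0] [0, 0, 1, 1] ∧ Satisfies N (uW n) (vW n)

/-- A monoid is finitely based. -/
def FinBased (M : Type*) [Monoid M] : Prop :=
  ∃ S : Finset (Word × Word),
    (∀ p ∈ S, Satisfies M p.1 p.2) ∧
    ∀ (N : Type) [Monoid N], (∀ p ∈ S, Satisfies N p.1 p.2) →
      ∀ u v : Word, Satisfies M u v → Satisfies N u v

/-- `U_n = x y₁² y₂² ⋯ y_n² x` (letters: `x = 0`, `y_i = i`). -/
def Uw (n : ℕ) : Word := 0 :: (((List.range n).map fun i => [i + 1, i + 1]).flatten ++ [0])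

/-- `V_n = x y₁² x y₂² x ⋯ x y_n² x` (letters: `x = 0`, `y_i = i`). -/
def Vw (n : ℕ) : Word := 0 :: ((List.range n).map fun i => [i + 1, i + 1, 0]).flatten

/-- The language `a⁺bb⁺ta⁺ = {aⁱ bʲ t aᵏ : i, k ≥ 1, j ≥ 2}` (`a = 0`, `b = 1`, `t = 2`). -/
def Lab : Set Word := {w | ∃ i j k : ℕ, 1 ≤ i ∧ 2 ≤ j ∧ 1 ≤ k ∧
  w = List.replicate i 0 ++ List.replicate j 1 ++ 2 :: List.replicate k 0}

/-- The β-class of `atb²a` as an explicit language: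
`{aⁱ t bʲ a w : i ≥ 1, j ≥ 2} ∪ {aⁱ t bʲ aᵏ b w : i, j, k ≥ 1}`, `w ∈ {a,b}*`
(`a = 0`, `b = 1`, `t = 2`). -/
def LatBBa : Set Word :=
  {w | (∃ i j : ℕ, 1 ≤ i ∧ 2 ≤ j ∧ ∃ r : Word, (∀ x ∈ r, x = 0 ∨ x = 1) ∧
      w = List.replicate i 0 ++ 2 :: (List.replicate j 1 ++ 0 :: r)) ∨
    (∃ i j k : ℕ, 1 ≤ i ∧ 1 ≤ j ∧ 1 ≤ k ∧ ∃ r : Word, (∀ x ∈ r, x = 0 ∨ x = 1) ∧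
      w = List.replicate i 0 ++ 2 :: (List.replicate j 1 ++ (List.replicate k 0 ++ 1 :: r)))}

/-- `u` is a factor (subword) of `x`. -/
def IsFactorOf (u x : Word) : Prop := ∃ p s : Word, x = p ++ u ++ s

/-- The syntactic congruence of a language `W`. -/
def SyntCon (W : Set Word) : Con (FreeMonoid ℕ) where
  r u v := ∀ p s : Word,
    p ++ FreeMonoid.toList u ++ s ∈ W ↔ p ++ FreeMonoid.toList v ++ s ∈ W
  iseqv := ⟨fun _ _ _ => Iff.rfl, fun h p s => (h p s).symm,
    fun h h' p s => (h p s).trans (h' p s)⟩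
  mul' := by
    intro w x y z h h' p s
    have h1 := h p (FreeMonoid.toList y ++ s)
    have h2 := h' (p ++ FreeMonoid.toList x) s
    simp only [FreeMonoid.toList_mul, List.append_assoc] at h1 h2 ⊢
    exact h1.trans h2

/-- The syntactic monoid of a language `W`. -/
abbrev SyntMonoid (W : Set Word) : Type := (SyntCon W).Quotient

/-! ### Concrete finite monoids -/

/-- The 7-element monoid `A¹`: identity `e1` adjoined to the semigroup `A = ⟨a,b,c ∣ a²=a, b²=b, ab=ca=0, ac=cb=c⟩ = {a,b,c,ba,bc,0}` (`z0` is the zero). -/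
inductive A1M : Type
  | e1 | a | b | c | ba | bc | z0
deriving DecidableEq

/-- Multiplication of `A1M`. -/
def A1M.mul : A1M → A1M → A1M
  | .e1, .e1 => .e1
  | .e1, .a => .a
  | .e1, .b => .b
  | .e1, .c => .c
  | .e1, .ba => .ba
  | .e1, .bc => .bc
  | .e1, .z0 => .z0
  | .a, .e1 => .a
  | .a, .a => .a
  | .a, .b => .z0
  | .a, .c => .c
  | .a, .ba => .z0
  | .a, .bc => .z0
  | .a, .z0 => .z0
  | .b, .e1 => .b
  | .b, .a => .ba
  | .b, .b => .b
  | .b, .c => .bc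
  | .b, .ba => .ba
  | .b, .bc => .bc
  | .b, .z0 => .z0
  | .c, .e1 => .c
  | .c, .a => .z0
  | .c, .b => .c
  | .c, .c => .z0
  | .c, .ba => .z0
  | .c, .bc => .z0
  | .c, .z0 => .z0
  | .ba, .e1 => .ba
  | .ba, .a => .ba
  | .ba, .b => .z0
  | .ba, .c => .bc
  | .ba, .ba => .z0
  | .ba, .bc => .z0
  | .ba, .z0 => .z0
  | .bc, .e1 => .bc
  | .bc, .a => .z0
  | .bc, .b => .bc
  | .bc, .c => .z0
  | .bc, .ba => .z0
  | .bc, .bc => .z0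
  | .bc, .z0 => .z0
  | .z0, .e1 => .z0
  | .z0, .a => .z0
  | .z0, .b => .z0
  | .z0, .c => .z0
  | .z0, .ba => .z0
  | .z0, .bc => .z0
  | .z0, .z0 => .z0

instance : Monoid A1M where
  one := .e1
  mul := A1M.mul
  mul_assoc := by intro x y z; cases x <;> cases y <;> cases z <;> rfl
  one_mul := by intro x; cases x <;> rfl
  mul_one := by intro x; cases x <;> rfl
/-- The 6-element monoid `E¹`: identity `e1` adjoined to the semigroup `E = ⟨a,b,c ∣ a²=ab=0, ba=ca=a, b²=bc=b, c²=cb=c⟩ = {a,b,c,ac,0}` (`z0` is the zero). -/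
inductive E1M : Type
  | e1 | a | b | c | ac | z0
deriving DecidableEq

/-- Multiplication of `E1M`. -/
def E1M.mul : E1M → E1M → E1M
  | .e1, .e1 => .e1
  | .e1, .a => .a
  | .e1, .b => .b
  | .e1, .c => .c
  | .e1, .ac => .ac
  | .e1, .z0 => .z0
  | .a, .e1 => .a
  | .a, .a => .z0
  | .a, .b => .z0
  | .a, .c => .ac
  | .a, .ac => .z0
  | .a, .z0 => .z0
  | .b, .e1 => .b
  | .b, .a => .a
  | .b, .b => .b
  | .b, .c => .b
  | .b, .ac => .ac
  | .b, .z0 => .z0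
  | .c, .e1 => .c
  | .c, .a => .a
  | .c, .b => .c
  | .c, .c => .c
  | .c, .ac => .ac
  | .c, .z0 => .z0
  | .ac, .e1 => .ac
  | .ac, .a => .z0
  | .ac, .b => .ac
  | .ac, .c => .ac
  | .ac, .ac => .z0
  | .ac, .z0 => .z0
  | .z0, .e1 => .z0
  | .z0, .a => .z0
  | .z0, .b => .z0
  | .z0, .c => .z0
  | .z0, .ac => .z0
  | .z0, .z0 => .z0

instance : Monoid E1M where
  one := .e1
  mul := E1M.mul
  mul_assoc := by intro x y z; cases x <;> cases y <;> cases z <;> rfl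
  one_mul := by intro x; cases x <;> rfl
  mul_one := by intro x; cases x <;> rfl
/-- The 5-element monoid `A₀¹`: identity `e1` adjoined to the semigroup `A₀ = ⟨a,b ∣ a²=a, b²=b, ab=0⟩ = {a,b,ba,0}` (`z0` is the zero). -/
inductive A01M : Type
  | e1 | a | b | ba | z0
deriving DecidableEq

/-- Multiplication of `A01M`. -/
def A01M.mul : A01M → A01M → A01M
  | .e1, .e1 => .e1
  | .e1, .a => .a
  | .e1, .b => .b
  | .e1, .ba => .ba
  | .e1, .z0 => .z0
  | .a, .e1 => .a
  | .a, .a => .a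
  | .a, .b => .z0
  | .a, .ba => .z0
  | .a, .z0 => .z0
  | .b, .e1 => .b
  | .b, .a => .ba
  | .b, .b => .b
  | .b, .ba => .ba
  | .b, .z0 => .z0
  | .ba, .e1 => .ba
  | .ba, .a => .ba
  | .ba, .b => .z0
  | .ba, .ba => .z0
  | .ba, .z0 => .z0
  | .z0, .e1 => .z0
  | .z0, .a => .z0
  | .z0, .b => .z0
  | .z0, .ba => .z0
  | .z0, .z0 => .z0

instance : Monoid A01M where
  one := .e1
  mul := A01M.mul
  mul_assoc := by intro x y z; cases x <;> cases y <;> cases z <;> rfl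
  one_mul := by intro x; cases x <;> rfl
  mul_one := by intro x; cases x <;> rfl


/-- The 3-element monoid `L₂¹`: the two-element left-zero semigroup with identity adjoined. -/
inductive LZ1 : Type
  | e | a | b
deriving DecidableEq

instance : Fintype LZ1 := ⟨{.e, .a, .b}, by intro x; cases x <;> simp⟩

instance : Monoid LZ1 where
  one := .e
  mul x y := match x with
    | .e => y
    | .a => .a
    | .b => .b
  mul_assoc := by decide
  one_mul := by decide
  mul_one := by decide

/-- The 3-element monoid `M(x) = {1, x, 0}` with `x·x = 0`. -/
inductive MX : Type
  | e | x | z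
deriving DecidableEq

instance : Fintype MX := ⟨{.e, .x, .z}, by intro x; cases x <;> simp⟩

instance : Monoid MX where
  one := .e
  mul a b := match a, b with
    | .e, b => b
    | a, .e => a
    | _, _ => .z
  mul_assoc := by decide
  one_mul := by decide
  mul_one := by decide

namespace S15

def ok (w : Word) : Prop := ∀ c ∈ w, c = 0 ∨ c = 1

instance : DecidablePred ok := fun w =>
  inferInstanceAs (Decidable (∀ c ∈ w, c = 0 ∨ c = 1))

def fc : Word → Option Bool
  | [] => none
  | c :: w => if c = 0 then some true else if c = 1 then some false else fc w

def K2 : Set Word := {x : Word | (∀ c ∈ x, c = 0 ∨ c = 1) ∧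
  2 ≤ x.count 0 ∧ 2 ≤ x.count 1 ∧ x.idxOf 0 < x.idxOf 1}

instance (w : Word) : Decidable (w ∈ K2) :=
  inferInstanceAs (Decidable ((∀ c ∈ w, c = 0 ∨ c = 1) ∧
    2 ≤ w.count 0 ∧ 2 ≤ w.count 1 ∧ w.idxOf 0 < w.idxOf 1))

lemma fc_append (x y : Word) : fc (x ++ y) = (fc x).or (fc y) := by
  induction x with
  | nil => rfl
  | cons c x ih =>
    by_cases h0 : c = 0
    · simp [fc, h0]
    · by_cases h1 : c = 1 <;> simp [fc, h0, h1, ih]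

lemma fcK (w : Word) (h0 : 0 ∈ w) (h1 : 1 ∈ w) :
    w.idxOf 0 < w.idxOf 1 ↔ fc w = some true := by
  induction w with
  | nil => cases h0
  | cons c w ih =>
    by_cases hc0 : c = 0
    · subst hc0
      simp [List.idxOf_cons, fc]
    · by_cases hc1 : c = 1
      · subst hc1
        simp [List.idxOf_cons, fc]
      · have h0' : 0 ∈ w := (List.mem_cons.mp h0).resolve_left fun e => hc0 e.symm
        have h1' : 1 ∈ w := (List.mem_cons.mp h1).resolve_left fun e => hc1 e.symm
        have e0 : (c == 0) = false := by simpa using hc0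
        have e1 : (c == 1) = false := by simpa using hc1
        rw [List.idxOf_cons, List.idxOf_cons, e0, e1]
        simp only [cond_false, fc, if_neg hc0, if_neg hc1]
        have := ih h0' h1'
        constructor
        · intro hlt
          exact this.mp (by omega)
        · intro hfc
          have := this.mpr hfc
          omega

lemma mem_K2 {w : Word} :
    w ∈ K2 ↔ ok w ∧ 2 ≤ w.count 0 ∧ 2 ≤ w.count 1 ∧ fc w = some true := by
  constructor
  · rintro ⟨h1, h2, h3, h4⟩
    exact ⟨h1, h2, h3, (fcK w (List.count_pos_iff.mp (by omega))
      (List.count_pos_iff.mp (by omega))).mp h4⟩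
  · rintro ⟨h1, h2, h3, h4⟩
    exact ⟨h1, h2, h3, (fcK w (List.count_pos_iff.mp (by omega))
      (List.count_pos_iff.mp (by omega))).mpr h4⟩

lemma ok_append {x y : Word} : ok (x ++ y) ↔ ok x ∧ ok y := by
  unfold ok
  constructor
  · intro h
    exact ⟨fun c hc => h c (List.mem_append_left _ hc),
      fun c hc => h c (List.mem_append_right _ hc)⟩
  · rintro ⟨hx, hy⟩ c hc
    rcases List.mem_append.mp hc with h | h
    · exact hx c h
    · exact hy c h

lemma syntcon_of {w₁ w₂ : Word} (hok : ok w₁ ↔ ok w₂)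
    (h0 : min 2 (w₁.count 0) = min 2 (w₂.count 0))
    (h1 : min 2 (w₁.count 1) = min 2 (w₂.count 1))
    (hfc : fc w₁ = fc w₂) (p s : Word) :
    p ++ w₁ ++ s ∈ K2 ↔ p ++ w₂ ++ s ∈ K2 := by
  rw [mem_K2, mem_K2]
  simp only [ok_append, List.count_append, fc_append, hfc]
  constructor <;> rintro ⟨⟨⟨hp, hw⟩, hs⟩, c0, c1, hf⟩
  · exact ⟨⟨⟨hp, hok.mp hw⟩, hs⟩, by omega, by omega, hf⟩
  · exact ⟨⟨⟨hp, hok.mpr hw⟩, hs⟩, by omega, by omega, hf⟩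

/-! ### MX computations -/

def g : ℕ → MX := fun n => if n = 0 then .e else if n = 1 then .x else .z

lemma g_add (m n : ℕ) : g m * g n = g (m + n) := by
  unfold g
  split_ifs <;> first | rfl | (exfalso; omega)

lemma g_inj {m n : ℕ} (h : g m = g n) : min 2 m = min 2 n := by
  unfold g at h
  split_ifs at h <;> first | omega | exact absurd h (by decide)

lemma gsum (f : ℕ → ℕ) : ∀ l : Word,
    (l.map fun x => g (f x)).prod = g ((l.map f).sum)
  | [] => rfl
  | a :: l => by
      rw [List.map_cons, List.prod_cons, gsum f l, g_add, List.map_cons, List.sum_cons]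

lemma sum_ite (a : ℕ) : ∀ l : Word,
    (l.map fun x => if x = a then 1 else 0).sum = l.count a
  | [] => rfl
  | c :: l => by
      rw [List.map_cons, List.sum_cons, sum_ite a l, List.count_cons]
      by_cases h : c = a <;> simp [h] <;> omega

/-! ### LZ1 computations -/

def eps : Option Bool → LZ1
  | none => .e
  | some true => .a
  | some false => .b

lemma eps_or (o o' : Option Bool) : eps (o.or o') = eps o * eps o' := by
  cases o with
  | none => rfl
  | some b => cases b <;> rfl

lemma eps_inj : ∀ o o' : Option Bool, eps o = eps o' → o = o' := by decide

lemma eps_fold (h : ℕ → Option Bool) : ∀ l : Word,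
    (l.map fun x => eps (h x)).prod = eps ((l.map h).foldr Option.or none)
  | [] => rfl
  | a :: l => by
      rw [List.map_cons, List.prod_cons, eps_fold h l, List.map_cons,
        List.foldr_cons, eps_or]

/-! ### flatten lemmas -/

lemma toList_prod (σ : ℕ → FreeMonoid ℕ) : ∀ l : Word,
    FreeMonoid.toList ((l.map σ).prod) = (l.map fun x => FreeMonoid.toList (σ x)).flatten
  | [] => rfl
  | a :: l => by
      rw [List.map_cons, List.prod_cons, FreeMonoid.toList_mul, toList_prod σ l,
        List.map_cons, List.flatten_cons]

lemma ok_flatten {L : List Word} : ok L.flatten ↔ ∀ w ∈ L, ok w := by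
  unfold ok
  constructor
  · intro h w hw c hc
    exact h c (List.mem_flatten.mpr ⟨w, hw, hc⟩)
  · intro h c hc
    obtain ⟨w, hw, hc'⟩ := List.mem_flatten.mp hc
    exact h w hw c hc'

lemma fc_flatten : ∀ L : List Word, fc L.flatten = (L.map fc).foldr Option.or none
  | [] => rfl
  | w :: L => by
      rw [List.flatten_cons, fc_append, fc_flatten L, List.map_cons, List.foldr_cons]

/-! ### transfer lemmas -/

lemma sat_of_injective {M N : Type*} [Monoid M] [Monoid N] (f : N →* M)
    (hf : Function.Injective f) {u v : Word} (h : Satisfies M u v) :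
    Satisfies N u v := by
  intro φ
  apply hf
  rw [map_list_prod, map_list_prod, List.map_map, List.map_map]
  exact h (f ∘ φ)

lemma sat_prod {M N : Type*} [Monoid M] [Monoid N] {u v : Word}
    (hM : Satisfies M u v) (hN : Satisfies N u v) : Satisfies (M × N) u v := by
  intro φ
  have key : ∀ w : Word, (w.map φ).prod =
      ((w.map fun x => (φ x).1).prod, (w.map fun x => (φ x).2).prod) := by
    intro w
    induction w with
    | nil => rfl
    | cons c w ih => simp [ih, Prod.ext_iff]
  rw [key u, key v, hM (fun x => (φ x).1), hN (fun x => (φ x).2)]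

/-! ### derived invariants -/

lemma cap_sum {u v : Word} (hM : Satisfies MX u v) (f : ℕ → ℕ) :
    min 2 ((u.map f).sum) = min 2 ((v.map f).sum) :=
  g_inj (by rw [← gsum, ← gsum]; exact hM fun x => g (f x))

lemma cap_count {u v : Word} (hM : Satisfies MX u v) (a : ℕ) :
    min 2 (u.count a) = min 2 (v.count a) := by
  have := cap_sum hM (fun x => if x = a then 1 else 0)
  rwa [sum_ite, sum_ite] at this

lemma mem_iff {u v : Word} (hM : Satisfies MX u v) (a : ℕ) : a ∈ u ↔ a ∈ v := by
  have := cap_count hM a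
  rw [← List.count_pos_iff, ← List.count_pos_iff]
  omega

lemma fold_eq {u v : Word} (hL : Satisfies LZ1 u v) (h : ℕ → Option Bool) :
    (u.map h).foldr Option.or none = (v.map h).foldr Option.or none :=
  eps_inj _ _ (by rw [← eps_fold, ← eps_fold]; exact hL fun x => eps (h x))

/-! ### embeddings -/

def mk (w : Word) : SyntMonoid K2 := ((FreeMonoid.ofList w : FreeMonoid ℕ) : SyntMonoid K2)

lemma mk_mul (w₁ w₂ : Word) : mk (w₁ ++ w₂) = mk w₁ * mk w₂ := by
  unfold mk
  rw [FreeMonoid.ofList_append, Con.coe_mul]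

lemma mk_eq (w₁ w₂ : Word)
    (h : ∀ p s : Word, p ++ w₁ ++ s ∈ K2 ↔ p ++ w₂ ++ s ∈ K2) : mk w₁ = mk w₂ :=
  ((SyntCon K2).eq).mpr (by
    intro p s
    simpa using h p s)

lemma mk_eq' (w₁ w₂ : Word) (hok : ok w₁ ↔ ok w₂)
    (h0 : min 2 (w₁.count 0) = min 2 (w₂.count 0))
    (h1 : min 2 (w₁.count 1) = min 2 (w₂.count 1))
    (hfc : fc w₁ = fc w₂) : mk w₁ = mk w₂ :=
  mk_eq _ _ (syntcon_of hok h0 h1 hfc)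

lemma mk_mul_eq (w w₁ w₂ : Word) (hok : ok w ↔ ok (w₁ ++ w₂))
    (h0 : min 2 (w.count 0) = min 2 ((w₁ ++ w₂).count 0))
    (h1 : min 2 (w.count 1) = min 2 ((w₁ ++ w₂).count 1))
    (hfc : fc w = fc (w₁ ++ w₂)) : mk w = mk w₁ * mk w₂ := by
  rw [← mk_mul]
  exact mk_eq' _ _ hok h0 h1 hfc

lemma mk_ne (w₁ w₂ p s : Word)
    (h : ¬(p ++ w₁ ++ s ∈ K2 ↔ p ++ w₂ ++ s ∈ K2)) : mk w₁ ≠ mk w₂ := by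
  intro he
  have h2 := ((SyntCon K2).eq).mp he p s
  simp only [FreeMonoid.toList_ofList] at h2
  exact h h2

def psiMf : MX → SyntMonoid K2
  | .e => mk []
  | .x => mk [0]
  | .z => mk [0, 0]

def psiM : MX →* SyntMonoid K2 where
  toFun := psiMf
  map_one' := rfl
  map_mul' a b := by
    cases a <;> cases b <;>
      exact mk_mul_eq _ _ _ (by decide) (by decide) (by decide) (by decide)

lemma psiM_inj : Function.Injective psiM := by
  intro a b h
  cases a <;> cases b <;> first
    | rfl
    | exact absurd h (mk_ne _ _ [0] [1, 1] (by decide))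
    | exact absurd h (mk_ne _ _ [] [1, 1] (by decide))

def psiLf : LZ1 → SyntMonoid K2
  | .e => mk []
  | .a => mk [0, 0, 1, 1]
  | .b => mk [1, 1, 0, 0]

def psiL : LZ1 →* SyntMonoid K2 where
  toFun := psiLf
  map_one' := rfl
  map_mul' a b := by
    cases a <;> cases b <;>
      exact mk_mul_eq _ _ _ (by decide) (by decide) (by decide) (by decide)

lemma psiL_inj : Function.Injective psiL := by
  intro a b h
  cases a <;> cases b <;> first
    | rfl
    | exact absurd h (mk_ne _ _ [] [] (by decide))
    | exact absurd h (mk_ne _ _ [0, 0] [] (by decide))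

/-! ### main directions -/

lemma forward {u v : Word} (h : Satisfies (LZ1 × MX) u v) :
    Satisfies (SyntMonoid K2) u v := by
  have hL : Satisfies LZ1 u v :=
    sat_of_injective (MonoidHom.inl LZ1 MX) (fun a b hab => congrArg Prod.fst hab) h
  have hMX : Satisfies MX u v :=
    sat_of_injective (MonoidHom.inr LZ1 MX) (fun a b hab => congrArg Prod.snd hab) h
  intro φ
  set σ : ℕ → FreeMonoid ℕ := fun x => (φ x).out with hσdef
  have hσ : ∀ x, ((σ x : FreeMonoid ℕ) : SyntMonoid K2) = φ x := fun x => Quotient.out_eq _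
  have I1 : ok ((u.map fun x => FreeMonoid.toList (σ x)).flatten) ↔
      ok ((v.map fun x => FreeMonoid.toList (σ x)).flatten) := by
    rw [ok_flatten, ok_flatten]
    constructor <;> intro hh w hw <;>
      obtain ⟨x, hx, rfl⟩ := List.mem_map.mp hw
    · exact hh _ (List.mem_map_of_mem ((mem_iff hMX x).mpr hx))
    · exact hh _ (List.mem_map_of_mem ((mem_iff hMX x).mp hx))
  have I2 : ∀ a : ℕ,
      min 2 (((u.map fun x => FreeMonoid.toList (σ x)).flatten).count a) =
      min 2 (((v.map fun x => FreeMonoid.toList (σ x)).flatten).count a) := by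
    intro a
    rw [List.count_flatten, List.count_flatten, List.map_map, List.map_map]
    exact cap_sum hMX fun x => (FreeMonoid.toList (σ x)).count a
  have I4 : fc ((u.map fun x => FreeMonoid.toList (σ x)).flatten) =
      fc ((v.map fun x => FreeMonoid.toList (σ x)).flatten) := by
    rw [fc_flatten, fc_flatten, List.map_map, List.map_map]
    exact fold_eq hL fun x => fc (FreeMonoid.toList (σ x))
  have key := syntcon_of I1 (I2 0) (I2 1) I4
  have coequ : ∀ w : Word, (((w.map σ).prod : FreeMonoid ℕ) : SyntMonoid K2) =
      (w.map φ).prod := by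
    intro w
    rw [show (((w.map σ).prod : FreeMonoid ℕ) : SyntMonoid K2) =
      (Con.mk' (SyntCon K2)) ((w.map σ).prod) from rfl, map_list_prod, List.map_map]
    simp only [Function.comp_def]
    congr 1
    exact List.map_congr_left fun x _ => hσ x
  rw [← coequ u, ← coequ v]
  refine ((SyntCon K2).eq).mpr ?_
  intro p s
  rw [toList_prod, toList_prod]
  exact key p s

lemma backward {u v : Word} (h : Satisfies (SyntMonoid K2) u v) :
    Satisfies (LZ1 × MX) u v :=
  sat_prod (sat_of_injective psiL psiL_inj h) (sat_of_injective psiM psiM_inj h)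

end S15

theorem stmt15 :
    ∀ u v : Word, Satisfies (LZ1 × MX) u v ↔
      Satisfies (SyntMonoid {x : Word | (∀ c ∈ x, c = 0 ∨ c = 1) ∧
        2 ≤ x.count 0 ∧ 2 ≤ x.count 1 ∧ x.idxOf 0 < x.idxOf 1}) u v := by
  intro u v
  exact ⟨S15.forward, S15.backward⟩
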